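/- Let m > 2, let V be a 2m-dimensional real vector space with a linear complex structure J, and let ω = ω^ℝ + i ω^𝕀 ∈ Λ^{m,0} V* be a nonzero complex (m,0)-form (a complex volume form on (V,J)). Then the set A = {A ∈ End_ℝ(V) : ι_{A(w)} ι_v ω^ℝ = ι_w ι_{A(v)} ω^ℝ for all v, w ∈ V} equals ℝ·id ⊕ ℝ·J. -/

import Mathlib

open Function Module

lemma auxA {K V : Type*} [Field K] [AddCommGroup V] [Module K V] {n : ℕ}
    {g : V [⋀^Fin n]→ₗ[K] K} (hg : g ≠ 0) (b : Basis (Fin n) K V) : g ⇑b ≠ 0 := by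
  intro h
  apply hg
  have h2 := g.eq_smul_basis_det b
  rw [h, zero_smul] at h2
  exact h2

lemma auxB {K V : Type*} [Field K] [AddCommGroup V] [Module K V] [FiniteDimensional K V]
    {n : ℕ} (hdim : finrank K V = n + 1)
    (g : V [⋀^Fin (n+1)]→ₗ[K] K) (hg : g ≠ 0) (x : V)
    (hx : ∀ rest : Fin n → V, g (Fin.cons x rest) = 0) : x = 0 := by
  by_contra hx0
  have hli : LinearIndepOn K id ({x} : Set V) := (linearIndepOn_singleton_iff K).mpr hx0
  letI : Fintype (hli.extend (Set.subset_univ _)) :=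
    FiniteDimensional.fintypeBasisIndex (Module.Basis.extend hli)
  have hcard : Fintype.card (hli.extend (Set.subset_univ _)) = n + 1 := by
    rw [← hdim, finrank_eq_card_basis (Module.Basis.extend hli)]
  let σ := Fintype.equivFinOfCardEq hcard
  let b := (Module.Basis.extend hli).reindex σ
  have hxs : x ∈ hli.extend (Set.subset_univ _) := hli.subset_extend _ (Set.mem_singleton x)
  set i := σ ⟨x, hxs⟩ with hi
  have hbi : b i = x := by
    simp only [b, Module.Basis.reindex_apply, hi, Equiv.symm_apply_apply]
    exact Module.Basis.extend_apply_self hli ⟨x, hxs⟩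
  have h1 : g (⇑b ∘ (Equiv.swap 0 i)) = Equiv.Perm.sign (Equiv.swap 0 i) • g ⇑b :=
    g.map_perm ⇑b _
  have h2 : (⇑b ∘ (Equiv.swap 0 i)) = Fin.cons x (fun j => b (Equiv.swap 0 i j.succ)) := by
    funext k
    refine Fin.cases ?_ (fun j => ?_) k
    · simp [Equiv.swap_apply_left, hbi]
    · simp [Fin.cons_succ]
  rw [h2, hx _] at h1
  have hb0 : g ⇑b = 0 := by
    rcases Int.units_eq_one_or (Equiv.Perm.sign (Equiv.swap 0 i)) with h | h <;>
      rw [h] at h1 <;> simpa using h1.symm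
  exact auxA hg b hb0

lemma auxC {K V : Type*} [Field K] [AddCommGroup V] [Module K V] [FiniteDimensional K V]
    {n : ℕ} (hdim : finrank K V = n + 2)
    (g : V [⋀^Fin (n+2)]→ₗ[K] K) (hg : g ≠ 0) (x y : V) (hy : y ≠ 0)
    (hxy : x ∉ Submodule.span K ({y} : Set V))
    (hvan : ∀ rest : Fin n → V, g (Fin.cons x (Fin.cons y rest)) = 0) : False := by
  have hli0 : LinearIndepOn K id ({y} : Set V) := (linearIndepOn_singleton_iff K).mpr hy
  have hli : LinearIndepOn K id (insert x {y} : Set V) := hli0.insert (by simpa using hxy)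
  letI : Fintype (hli.extend (Set.subset_univ _)) :=
    FiniteDimensional.fintypeBasisIndex (Module.Basis.extend hli)
  have hcard : Fintype.card (hli.extend (Set.subset_univ _)) = n + 2 := by
    rw [← hdim, finrank_eq_card_basis (Module.Basis.extend hli)]
  let σ := Fintype.equivFinOfCardEq hcard
  let b := (Module.Basis.extend hli).reindex σ
  have hxs : x ∈ hli.extend (Set.subset_univ _) :=
    hli.subset_extend _ (Set.mem_insert x {y})
  have hys : y ∈ hli.extend (Set.subset_univ _) :=
    hli.subset_extend _ (Set.mem_insert_of_mem x rfl)
  set i := σ ⟨x, hxs⟩ with hi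
  set j := σ ⟨y, hys⟩ with hj
  have hbi : b i = x := by
    simp only [b, Module.Basis.reindex_apply, hi, Equiv.symm_apply_apply]
    exact Module.Basis.extend_apply_self hli ⟨x, hxs⟩
  have hbj : b j = y := by
    simp only [b, Module.Basis.reindex_apply, hj, Equiv.symm_apply_apply]
    exact Module.Basis.extend_apply_self hli ⟨y, hys⟩
  have hxyne : x ≠ y := by
    rintro rfl
    exact hxy (Submodule.mem_span_singleton_self x)
  have hij : i ≠ j := by
    intro h
    apply hxyne
    rw [← hbi, ← hbj, h]
  have hw0 : Equiv.swap (0 : Fin (n+2)) i j ≠ 0 := by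
    intro h
    apply hij
    have h2 := congrArg (Equiv.swap (0 : Fin (n+2)) i) h
    simpa using h2.symm
  have h01 : (0 : Fin (n+2)) ≠ 1 := by
    intro h
    have := congrArg Fin.val h
    simp at this
  set π : Equiv.Perm (Fin (n+2)) :=
    (Equiv.swap (1 : Fin (n+2)) (Equiv.swap (0 : Fin (n+2)) i j)).trans
      (Equiv.swap (0 : Fin (n+2)) i) with hπ
  have hπ0 : π 0 = i := by
    simp only [hπ, Equiv.trans_apply]
    rw [Equiv.swap_apply_of_ne_of_ne h01 hw0.symm]
    · exact Equiv.swap_apply_left _ _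
  have hπ1 : π 1 = j := by
    simp only [hπ, Equiv.trans_apply]
    rw [Equiv.swap_apply_left, Equiv.swap_apply_self]
  have h1 : g (⇑b ∘ π) = Equiv.Perm.sign π • g ⇑b := g.map_perm ⇑b _
  have h2 : (⇑b ∘ π) = Fin.cons x (Fin.cons y (fun k => b (π k.succ.succ))) := by
    funext k
    refine Fin.cases ?_ (fun k' => ?_) k
    · simp [hπ0, hbi]
    · refine Fin.cases ?_ (fun k'' => ?_) k'
      · have h10 : Fin.succ (0 : Fin (n+1)) = (1 : Fin (n+2)) := by ext; simp
        simp [h10, hπ1, hbj]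
      · simp [Fin.cons_succ]
  rw [h2, hvan _] at h1
  have hb0 : g ⇑b = 0 := by
    rcases Int.units_eq_one_or (Equiv.Perm.sign π) with h | h <;>
      rw [h] at h1 <;> simpa using h1.symm
  exact auxA hg b hb0

theorem stmt5 {V : Type*} [AddCommGroup V] [Module ℝ V] [FiniteDimensional ℝ V]
    (q : ℕ) (hdim : Module.finrank ℝ V = 2 * (q + 3))
    (J : V →ₗ[ℝ] V) (hJ : J.comp J = -LinearMap.id)
    (ω : V [⋀^Fin (q + 3)]→ₗ[ℝ] ℂ)
    (hC : ∀ (v : Fin (q + 3) → V) (i : Fin (q + 3)),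
      ω (Function.update v i (J (v i))) = Complex.I * ω v)
    (hne : ω ≠ 0) (A : V →ₗ[ℝ] V) :
    (∀ (v w : V) (u : Fin (q + 1) → V),
        (ω (Fin.cons v (Fin.cons (A w) u))).re =
          (ω (Fin.cons (A v) (Fin.cons w u))).re)
      ↔ ∃ a b : ℝ, A = a • LinearMap.id + b • J := by
  classical
  have hJJ : ∀ v : V, J (J v) = -v := by
    intro v
    have := LinearMap.ext_iff.mp hJ v
    simpa using this
  letI sC : SMul ℂ V := ⟨fun z v => z.re • v + z.im • J v⟩
  have hsmul : ∀ (z : ℂ) (v : V), z • v = z.re • v + z.im • J v := fun _ _ => rfl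
  letI mC : Module ℂ V := Module.ofMinimalAxioms
    (fun z u v => by
      rw [hsmul, hsmul, hsmul, map_add]
      module)
    (fun z w v => by
      rw [hsmul, hsmul, hsmul, Complex.add_re, Complex.add_im]
      module)
    (fun z w v => by
      rw [hsmul, hsmul, hsmul, map_add, map_smul, map_smul, hJJ, Complex.mul_re,
        Complex.mul_im]
      module)
    (fun v => by rw [hsmul]; simp)
  haveI : IsScalarTower ℝ ℂ V := ⟨by
    intro r z v
    rw [hsmul, hsmul, Complex.real_smul, Complex.mul_re, Complex.mul_im]
    simp
    module⟩
  haveI : FiniteDimensional ℂ V := Module.Finite.right ℝ ℂ V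
  have hrank : finrank ℂ V = q + 3 := by
    have h2 : finrank ℝ ℂ * finrank ℂ V = finrank ℝ V := Module.finrank_mul_finrank ℝ ℂ V
    rw [hdim, Complex.finrank_real_complex] at h2
    omega
  have hCup : ∀ (v : Fin (q+3) → V) (i : Fin (q+3)) (x : V),
      ω (update v i (J x)) = Complex.I * ω (update v i x) := by
    intro v i x
    have := hC (update v i x) i
    simpa using this
  -- index arithmetic helpers
  have h1succ : (1 : Fin (q+3)) = (0 : Fin (q+2)).succ := by ext; simp
  have h2succ : (2 : Fin (q+3)) = ((0 : Fin (q+1)).succ).succ := by ext; simp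
  have hupd1 : ∀ (v w y : V) (u : Fin (q+1) → V),
      update (Fin.cons v (Fin.cons w u) : Fin (q+3) → V) 1 y
        = (Fin.cons v (Fin.cons y u) : Fin (q+3) → V) := by
    intro v w y u
    rw [h1succ, ← Fin.cons_update, Fin.update_cons_zero]
  have hupd2 : ∀ (v w y : V) (u : Fin (q+1) → V),
      update (Fin.cons v (Fin.cons w u) : Fin (q+3) → V) 2 y
        = (Fin.cons v (Fin.cons w (update u 0 y)) : Fin (q+3) → V) := by
    intro v w y u
    rw [h2succ, ← Fin.cons_update, ← Fin.cons_update]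
  -- J-insertion lemmas
  have hJ0 : ∀ (x : V) (rest : Fin (q+2) → V),
      ω (Fin.cons (J x) rest) = Complex.I * ω (Fin.cons x rest) := by
    intro x rest
    have := hCup (Fin.cons x rest) 0 x
    rwa [Fin.update_cons_zero, Fin.update_cons_zero] at this
  have hJ1 : ∀ (v w : V) (u : Fin (q+1) → V),
      ω (Fin.cons v (Fin.cons (J w) u)) = Complex.I * ω (Fin.cons v (Fin.cons w u)) := by
    intro v w u
    have := hCup (Fin.cons v (Fin.cons w u)) 1 w
    rwa [hupd1, hupd1] at this
  have hJ2 : ∀ (v w : V) (u : Fin (q+1) → V),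
      ω (Fin.cons v (Fin.cons w (update u 0 (J (u 0))))) =
        Complex.I * ω (Fin.cons v (Fin.cons w u)) := by
    intro v w u
    have := hCup (Fin.cons v (Fin.cons w u)) 2 (u 0)
    rwa [hupd2, hupd2, Function.update_eq_self] at this
  -- swap of the first two slots
  have hswap : ∀ (v w : V) (u : Fin (q+1) → V),
      ω (Fin.cons w (Fin.cons v u)) = -ω (Fin.cons v (Fin.cons w u)) := by
    intro v w u
    have h01 : (0 : Fin (q+3)) ≠ 1 := by
      intro h
      have := congrArg Fin.val h
      simp at this
    have hfun : (Fin.cons v (Fin.cons w u)) ∘ (Equiv.swap (0 : Fin (q+3)) 1) =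
        Fin.cons w (Fin.cons v u) := by
      funext k
      refine Fin.cases ?_ (fun k' => ?_) k
      · simp only [comp_apply, Equiv.swap_apply_left]
        rw [h1succ]
        simp
      · refine Fin.cases ?_ (fun k'' => ?_) k'
        · rw [← h1succ]
          simp only [comp_apply, Equiv.swap_apply_right]
          rw [h1succ]
          simp
        · have hne0 : k''.succ.succ ≠ (0 : Fin (q+3)) := Fin.succ_ne_zero _
          have hne1 : k''.succ.succ ≠ (1 : Fin (q+3)) := by
            rw [h1succ]
            intro h
            exact Fin.succ_ne_zero _ (Fin.succ_injective _ h)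
          simp only [comp_apply, Equiv.swap_apply_of_ne_of_ne hne0 hne1]
          simp [Fin.cons_succ]
    calc ω (Fin.cons w (Fin.cons v u))
        = ω ((Fin.cons v (Fin.cons w u)) ∘ (Equiv.swap (0 : Fin (q+3)) 1)) := by rw [hfun]
      _ = -ω (Fin.cons v (Fin.cons w u)) := ω.map_swap _ h01
  -- linearity helpers in slot 0
  have hsub0 : ∀ (x y : V) (rest : Fin (q+2) → V),
      ω (Fin.cons (x - y) rest) = ω (Fin.cons x rest) - ω (Fin.cons y rest) := by
    intro x y rest
    have := ω.map_update_sub (Fin.cons x rest) 0 x y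
    rwa [Fin.update_cons_zero, Fin.update_cons_zero, Fin.update_cons_zero] at this
  -- the complex alternating map
  let ωc : V [⋀^Fin (q+3)]→ₗ[ℂ] ℂ :=
    { toFun := ω
      map_update_add' := fun v i x y => ω.map_update_add v i x y
      map_update_smul' := fun v i z x => by
        rename_i inst
        obtain rfl : inst = instDecidableEqFin (q+3) := Subsingleton.elim _ _
        rw [hsmul, ω.map_update_add, ω.map_update_smul, ω.map_update_smul, hCup,
          Complex.real_smul, Complex.real_smul, smul_eq_mul]
        linear_combination ω (update v i x) * Complex.re_add_im z
      map_eq_zero_of_eq' := fun v i j h hij => ω.map_eq_zero_of_eq v h hij }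
  have hωc : ∀ v, ωc v = ω v := fun _ => rfl
  have hωcne : ωc ≠ 0 := by
    intro h
    apply hne
    ext v
    rw [← hωc v, h]
    rfl
  constructor
  · -- hard direction
    intro H
    -- real part of the symmetrized expression vanishes
    have hre : ∀ (v w : V) (u : Fin (q+1) → V),
        (ω (Fin.cons (A v) (Fin.cons w u)) + ω (Fin.cons (A w) (Fin.cons v u))).re = 0 := by
      intro v w u
      have h1 := H v w u
      have h2 := hswap (A w) v u
      rw [h2] at h1
      simp only [Complex.neg_re] at h1
      simp only [Complex.add_re]
      linarith
    have hG : ∀ (v w : V) (u : Fin (q+1) → V),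
        ω (Fin.cons (A v) (Fin.cons w u)) + ω (Fin.cons (A w) (Fin.cons v u)) = 0 := by
      intro v w u
      have him := hre v w (update u 0 (J (u 0)))
      rw [hJ2, hJ2] at him
      have hr := hre v w u
      apply Complex.ext
      · simpa using hr
      · simp only [Complex.add_re, Complex.mul_re, Complex.I_re, Complex.I_im] at him
        simp only [Complex.add_im, Complex.zero_im]
        linarith
    have hsym : ∀ (v w : V) (u : Fin (q+1) → V),
        ω (Fin.cons (A v) (Fin.cons w u)) = ω (Fin.cons v (Fin.cons (A w) u)) := by
      intro v w u
      have h1 := eq_neg_of_add_eq_zero_left (hG v w u)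
      rw [h1, hswap v (A w) u, neg_neg]
    have hAJ : ∀ (v : V) (rest : Fin (q+2) → V),
        ω (Fin.cons (A (J v)) rest) = Complex.I * ω (Fin.cons (A v) rest) := by
      intro v rest
      have hr := (Fin.cons_self_tail rest).symm
      rw [hr, hsym (J v) (rest 0), hJ0, ← hsym v (rest 0)]
    have hcomm : ∀ v : V, A (J v) = J (A v) := by
      intro v
      have hz : ∀ rest : Fin (q+2) → V, ωc (Fin.cons (A (J v) - J (A v)) rest) = 0 := by
        intro rest
        rw [hωc, hsub0, hAJ, hJ0 (A v), sub_self]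
      have h0 := auxB (K := ℂ) (n := q+2) (by rw [hrank]) ωc hωcne _ hz
      exact sub_eq_zero.mp h0
    have hAsmulC : ∀ (z : ℂ) (v : V), A (z • v) = z • A v := by
      intro z v
      rw [hsmul, hsmul, map_add, map_smul, map_smul, hcomm]
    have hvmul : ∀ v : V, v ≠ 0 → ∃ c : ℂ, A v = c • v := by
      intro v hv
      have hspan : A v ∈ Submodule.span ℂ ({v} : Set V) := by
        by_contra hns
        refine auxC (K := ℂ) (n := q+1) (by rw [hrank]) ωc hωcne (A v) v hv hns ?_
        intro rest
        show ω (Fin.cons (A v) (Fin.cons v rest)) = 0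
        have h1 := hsym v v rest
        have h2 := hswap (A v) v rest
        rw [h2] at h1
        have h3 : ω (Fin.cons (A v) (Fin.cons v rest)) +
            ω (Fin.cons (A v) (Fin.cons v rest)) = 0 := by
          linear_combination h1
        exact add_self_eq_zero.mp h3
      obtain ⟨c, hc⟩ := Submodule.mem_span_singleton.mp hspan
      exact ⟨c, hc.symm⟩
    haveI : Nontrivial V := Module.nontrivial_of_finrank_pos (R := ℝ)
      (show 0 < finrank ℝ V by rw [hdim]; omega)
    obtain ⟨v₀, hv₀⟩ := exists_ne (0 : V)
    obtain ⟨c, hc⟩ := hvmul v₀ hv₀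
    have hall : ∀ v : V, A v = c • v := by
      intro v
      by_cases hv : v ∈ Submodule.span ℂ ({v₀} : Set V)
      · obtain ⟨z, rfl⟩ := Submodule.mem_span_singleton.mp hv
        rw [hAsmulC, hc, smul_smul, smul_smul, mul_comm]
      · have hvne : v ≠ 0 := by
          rintro rfl
          exact hv (Submodule.zero_mem _)
        obtain ⟨d, hd⟩ := hvmul v hvne
        have hsumne : v + v₀ ≠ 0 := by
          intro h
          apply hv
          have h2 : v = -v₀ := eq_neg_of_add_eq_zero_left h
          rw [h2]
          exact Submodule.neg_mem _ (Submodule.mem_span_singleton_self v₀)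
        obtain ⟨e, he⟩ := hvmul (v + v₀) hsumne
        rw [map_add, hd, hc, smul_add] at he
        by_cases hed : e = d
        · subst hed
          have h2 : c • v₀ = e • v₀ := add_left_cancel he
          have h3 : c = e := smul_left_injective ℂ hv₀ h2
          rw [hd, h3]
        · have h1 : (e - d) • v = (c - e) • v₀ := by
            calc (e - d) • v = (e • v + e • v₀) - (d • v + e • v₀) := by
                  rw [sub_smul]; abel
              _ = (d • v + c • v₀) - (d • v + e • v₀) := by rw [he]
              _ = (c - e) • v₀ := by rw [sub_smul]; abel
          have hedne : e - d ≠ 0 := sub_ne_zero.mpr hed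
          have h2 : v = ((e - d)⁻¹ * (c - e)) • v₀ := by
            have h3 := congrArg (fun x => (e - d)⁻¹ • x) h1
            simp only [smul_smul] at h3
            rw [inv_mul_cancel₀ hedne, one_smul] at h3
            exact h3
          exact absurd (Submodule.mem_span_singleton.mpr ⟨_, h2.symm⟩) hv
    refine ⟨c.re, c.im, ?_⟩
    ext v
    have h1 := hall v
    rw [hsmul] at h1
    simp only [LinearMap.add_apply, LinearMap.smul_apply, LinearMap.id_apply]
    exact h1
  · rintro ⟨a, b, rfl⟩
    intro v w u
    have hl1 : ω (Fin.cons v (Fin.cons (a • w + b • J w) u)) =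
        a • ω (Fin.cons v (Fin.cons w u)) + b • ω (Fin.cons v (Fin.cons (J w) u)) := by
      have h1 := ω.map_update_add (Fin.cons v (Fin.cons w u)) 1 (a • w) (b • J w)
      have h2 := ω.map_update_smul (Fin.cons v (Fin.cons w u)) 1 a w
      have h3 := ω.map_update_smul (Fin.cons v (Fin.cons w u)) 1 b (J w)
      rw [hupd1, hupd1, hupd1] at h1
      rw [hupd1, hupd1] at h2
      rw [hupd1, hupd1] at h3
      rw [h1, h2, h3]
    have hl0 : ω (Fin.cons (a • v + b • J v) (Fin.cons w u)) =
        a • ω (Fin.cons v (Fin.cons w u)) + b • ω (Fin.cons (J v) (Fin.cons w u)) := by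
      have h1 := ω.map_update_add (Fin.cons v (Fin.cons w u)) 0 (a • v) (b • J v)
      have h2 := ω.map_update_smul (Fin.cons v (Fin.cons w u)) 0 a v
      have h3 := ω.map_update_smul (Fin.cons v (Fin.cons w u)) 0 b (J v)
      rw [Fin.update_cons_zero, Fin.update_cons_zero, Fin.update_cons_zero] at h1
      rw [Fin.update_cons_zero, Fin.update_cons_zero] at h2
      rw [Fin.update_cons_zero, Fin.update_cons_zero] at h3
      rw [h1, h2, h3]
    simp only [LinearMap.add_apply, LinearMap.smul_apply, LinearMap.id_apply]
    rw [hl1, hl0, hJ1, hJ0]
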